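/- Let M, L ∈ ℝ^{2n×2n} form a symplectic matrix pencil and let M̂ = M⋆ M, L̂ = L⋆ L be a doubling transformation of M − λL. If U, V ∈ ℝ^{n×m} and S ∈ ℝ^{m×m} satisfy M·[U; V] = L·[U; V]·S (block column [U; V] ∈ ℝ^{2n×m}), then M̂·[U; V] = L̂·[U; V]·S². -/

import Mathlib

open Matrix

theorem stmt_1 (n m : ℕ)
    (M L Mst Lst J : Matrix (Fin n ⊕ Fin n) (Fin n ⊕ Fin n) ℝ)
    (hJ : J = fromBlocks 0 1 (-1) 0)
    (hsymp : M * J * Mᵀ = L * J * Lᵀ)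
    (hrank : (fromCols Mst Lst).rank = 2 * n)
    (hswap : Mst * L = Lst * M)
    (U V : Matrix (Fin n) (Fin m) ℝ) (S : Matrix (Fin m) (Fin m) ℝ)
    (h : M * fromRows U V = L * (fromRows U V * S)) :
    (Mst * M) * fromRows U V = (Lst * L) * (fromRows U V * S ^ 2) := by
  calc (Mst * M) * fromRows U V = Mst * (L * (fromRows U V * S)) := by
        rw [Matrix.mul_assoc, h]
    _ = (Mst * L) * (fromRows U V * S) := by rw [Matrix.mul_assoc]
    _ = Lst * (M * fromRows U V * S) := by rw [hswap, Matrix.mul_assoc, Matrix.mul_assoc]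
    _ = (Lst * L) * (fromRows U V * S ^ 2) := by
        rw [h, sq, Matrix.mul_assoc, Matrix.mul_assoc, Matrix.mul_assoc]
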